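/- In any finite semigroup S belonging to LG (every local monoid eSe with e idempotent is a group), the identity w₁ w₂^ω w₃ = w₁ (w₂^ω w₃ a w₂^ω)^ω w₃ holds for all w₁, w₂, w₃, a ∈ S (with w₁, w₃ possibly empty, i.e., in S¹). -/

import Mathlib

lemma aux_pow_inv {M : Type*} [Monoid M] (T Y E : M) (hTY : T * Y = E)
    (hTE : T * E = T) : ∀ n : ℕ, T ^ (n + 1) * Y ^ (n + 1) = E := by
  intro n
  induction n with
  | zero => simpa using hTY
  | succ m ih =>
      rw [pow_succ' T, pow_succ Y, mul_assoc, ← mul_assoc (T ^ (m+1)), ih, ← mul_assoc, hTE, hTY]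

/-- A finite semigroup is a local group if `eSe` is a group (with identity `e`)
for every idempotent `e`. -/
def IsLocalGroup (S : Type*) [Semigroup S] : Prop :=
  ∀ e : S, e * e = e → ∀ s : S,
    ∃ y : S, e * y * e = y ∧ (e * s * e) * y = e ∧ y * (e * s * e) = e

/-- In a finite local group `S`, the identity `w₁ w₂^ω w₃ = w₁ (w₂^ω w₃ a w₂^ω)^ω w₃`
holds, where `w₁, w₃` range over `S¹`, `s^ω` denotes the idempotent power. -/
theorem localGroup_omega_identity {S : Type*} [Semigroup S] [Finite S]
    (hLG : IsLocalGroup S) (w₁ w₃ : WithOne S) (w₂ a : S) (e : S) (f : WithOne S)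
    (he : (∃ n : ℕ, 1 ≤ n ∧ ((w₂ : WithOne S)) ^ n = (e : WithOne S)) ∧ e * e = e)
    (hf : (∃ n : ℕ, 1 ≤ n ∧
        ((e : WithOne S) * w₃ * (a : WithOne S) * (e : WithOne S)) ^ n = f) ∧ f * f = f) :
    w₁ * (e : WithOne S) * w₃ = w₁ * f * w₃ := by
  obtain ⟨⟨n, hn, hfn⟩, hff⟩ := hf
  have hee := he.2
  have hE : (e : WithOne S) * e = e := by rw [← WithOne.coe_mul, hee]
  -- extract t with coercion
  obtain ⟨t, hT⟩ : ∃ t : S, (e : WithOne S) * w₃ * ↑a * ↑e = ↑t := by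
    clear hfn
    induction w₃ using WithOne.cases_on
    · exact ⟨e * a * e, by simp⟩
    · intro s; exact ⟨e * s * a * e, by simp [mul_assoc]⟩
  have hE' : ∀ x : WithOne S, (↑e : WithOne S) * (↑e * x) = ↑e * x := fun x => by
    rw [← mul_assoc, hE]
  have hsand : (e : WithOne S) * ↑t * ↑e = ↑t := by
    rw [← hT]; simp only [mul_assoc, hE', hE]
  have ht : e * t * e = t := by exact_mod_cast hsand
  obtain ⟨y, hy1, hy2, hy3⟩ := hLG e hee t
  rw [ht] at hy2
  have hTY : (t : WithOne S) * ↑y = ↑e := by exact_mod_cast hy2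
  have hTE : (t : WithOne S) * ↑e = ↑t := by
    conv_lhs => rw [← hsand]
    rw [mul_assoc, mul_assoc, hE, ← mul_assoc, hsand]
  rw [hT] at hfn
  obtain ⟨m, rfl⟩ : ∃ m, n = m + 1 := ⟨n - 1, (Nat.succ_pred_eq_of_pos hn).symm⟩
  have hinv : (t : WithOne S) ^ (m+1) * (↑y : WithOne S) ^ (m+1) = ↑e :=
    aux_pow_inv _ _ _ hTY hTE m
  have hfE : f * ↑e = f := by
    rw [← hfn, pow_succ, mul_assoc, hTE]
  have hfE2 : f * (e : WithOne S) = ↑e := by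
    have hft : f * (t : WithOne S) ^ (m+1) = f := by rw [hfn]; exact hff
    calc f * (e : WithOne S) = f * ((t : WithOne S) ^ (m+1) * (↑y : WithOne S) ^ (m+1)) := by
          rw [hinv]
      _ = f * (t : WithOne S) ^ (m+1) * (↑y : WithOne S) ^ (m+1) := (mul_assoc _ _ _).symm
      _ = f * (↑y : WithOne S) ^ (m+1) := by rw [hft]
      _ = (t : WithOne S) ^ (m+1) * (↑y : WithOne S) ^ (m+1) := by rw [← hfn]
      _ = ↑e := hinv
  have : f = (e : WithOne S) := by rw [← hfE, hfE2]
  rw [this]
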